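/- Let {f_i}_{i∈I} be a finite family of vectors in a vector space X and M a positive integer. There exists a partition {I_j}_{j=1}^M of I with each {f_i}_{i∈I_j} linearly independent if and only if for every nonempty J ⊆ I, |J| ≤ M · dim span{f_i}_{i∈J}. -/

import Mathlib

open Submodule Set Function

set_option linter.unusedSectionVars false

section RadoHornAux

variable {K X : Type*} [Field K] [AddCommGroup X] [Module K X]
variable {I : Type*} [Fintype I] {f : I → X} {M : ℕ}


private lemma rh_li_mono {s t : Set I} (h : s ⊆ t)
    (ht : LinearIndependent K (t.restrict f)) : LinearIndependent K (s.restrict f) :=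
  ht.comp (Set.inclusion h) (Set.inclusion_injective h)

private lemma rh_ncard_eq_finrank {s : Set I} (hs : LinearIndependent K (s.restrict f)) :
    s.ncard = Module.finrank K (span K (f '' s)) := by
  classical
  haveI : Fintype s := s.toFinite.fintype
  rw [← Set.range_restrict, finrank_span_eq_card (b := s.domRestrict f) hs, Set.ncard_eq_toFinset_card',
    Set.toFinset_card]

private lemma rh_mem_span_of_insert {W : Submodule K X} {T : Set X} {a b : X}
    (h : a ∈ span K (insert b T)) (ha : a ∈ W) (hT : span K T ≤ W) (hb : b ∉ W) :
    a ∈ span K T := by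
  rcases Submodule.mem_span_insert.mp h with ⟨c, z, hz, rfl⟩
  by_cases hc : c = 0
  · simpa [hc] using hz
  · exfalso
    apply hb
    have hzW : z ∈ W := hT hz
    have : c • b ∈ W := by
      have : c • b + z - z ∈ W := W.sub_mem ha hzW
      simpa using this
    have := W.smul_mem c⁻¹ this
    rwa [smul_smul, inv_mul_cancel₀ hc, one_smul] at this

private lemma rh_li_insert {s : Set I} {x : I} (hs : LinearIndependent K (s.restrict f))
    (hx : f x ∉ span K (f '' s)) :
    LinearIndependent K ((insert x s).restrict f) := by
  classical
  have hxs : x ∉ s := fun h => hx (subset_span ⟨x, h, rfl⟩)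
  have hs' := (linearIndepOn_iff (s := s) (v := f)).mp hs
  refine (linearIndepOn_iff (s := insert x s) (v := f)).mpr ?_
  intro l hl hl0
  rw [Finsupp.mem_supported] at hl
  have hlex : l x = 0 := by
    by_contra hlx
    apply hx
    have hdec : Finsupp.single x (l x) + l.erase x = l := Finsupp.single_add_erase x l
    have hconv : l x • f x + Finsupp.linearCombination K f (l.erase x) = 0 := by
      rw [← Finsupp.linearCombination_single K (v := f) (l x) x, ← map_add, hdec, hl0]
    have hmem : Finsupp.linearCombination K f (l.erase x) ∈ span K (f '' s) := by
      apply (Finsupp.mem_span_image_iff_linearCombination K).mpr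
      refine ⟨l.erase x, ?_, rfl⟩
      rw [Finsupp.mem_supported]
      intro a ha
      simp only [Finset.mem_coe, Finsupp.support_erase, Finset.mem_erase] at ha
      rcases hl ha.2 with h | h
      · exact absurd h ha.1
      · exact h
    have : f x = -(l x)⁻¹ • Finsupp.linearCombination K f (l.erase x) := by
      have h1 : l x • f x = - Finsupp.linearCombination K f (l.erase x) := by
        linear_combination (norm := module) hconv
      rw [neg_smul, ← smul_neg, ← h1, smul_smul, inv_mul_cancel₀ hlx, one_smul]
    rw [this]
    exact (span K (f '' s)).smul_mem _ hmem
  have hsupp : l ∈ Finsupp.supported K K s := by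
    rw [Finsupp.mem_supported]
    intro a ha
    rcases hl ha with h | h
    · exact absurd (h ▸ ha) (Finsupp.notMem_support_iff.mpr (h ▸ hlex))
    · exact h
  exact hs' l hsupp hl0

private lemma rh_circuit {s : Set I} {i : I} (hs : LinearIndependent K (s.restrict f))
    (hfi : f i ∈ span K (f '' s)) :
    ∃ C : Set I, C ⊆ s ∧ f i ∈ span K (f '' C) ∧
      ∀ i' ∈ C, f i ∉ span K (f '' (s \ {i'})) := by
  classical
  rcases (Finsupp.mem_span_image_iff_linearCombination K).mp hfi with ⟨l, hl, hli⟩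
  rw [Finsupp.mem_supported] at hl
  refine ⟨↑l.support, hl, ?_, ?_⟩
  · exact (Finsupp.mem_span_image_iff_linearCombination K).mpr
      ⟨l, (Finsupp.mem_supported K l).mpr subset_rfl, hli⟩
  · intro i' hi' hcon
    rcases (Finsupp.mem_span_image_iff_linearCombination K).mp hcon with ⟨l2, hl2, hl2i⟩
    rw [Finsupp.mem_supported] at hl2
    have hz : Finsupp.linearCombination K f (l - l2) = 0 := by
      rw [map_sub, hli, hl2i, sub_self]
    have hsup : l - l2 ∈ Finsupp.supported K K s := by
      rw [Finsupp.mem_supported]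
      refine subset_trans (Finset.coe_subset.mpr Finsupp.support_sub) ?_
      rw [Finset.coe_union]
      exact union_subset hl (hl2.trans diff_subset)
    have heq := (linearIndepOn_iff (s := s) (v := f)).mp hs _ hsup hz
    have hl2i' : l2 i' = 0 := by
      by_contra h
      exact (hl2 (Finsupp.mem_support_iff.mpr h)).2 rfl
    have hne : l i' ≠ 0 := by
      simpa [Finsupp.mem_support_iff] using hi'
    apply hne
    have h0 : l i' - l2 i' = 0 := by rw [← Finsupp.sub_apply, heq, Finsupp.zero_apply]
    rw [hl2i'] at h0
    simpa using h0

variable (K f)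

/-- The tuples of disjoint independent index sets. -/
private def RHGood (B : Fin M → Set I) : Prop :=
  Pairwise (Function.onFun Disjoint B) ∧ ∀ j, LinearIndependent K ((B j).restrict f)

private noncomputable def RHw (B : Fin M → Set I) : ℕ := ∑ j, (B j).ncard

/-- Exchange-graph link: `v` is in the fundamental circuit of `u` w.r.t. part `j`. -/
private def RHLink (B : Fin M → Set I) (u : I) (j : Fin M) (v : I) : Prop :=
  v ∈ B j ∧ f u ∈ span K (f '' B j) ∧ f u ∉ span K (f '' (B j \ {v}))

private def RHReach (B : Fin M → Set I) (x : I) : ℕ → I → Prop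
  | 0 => fun v => v = x
  | n + 1 => fun v => ∃ u j, RHReach B x n u ∧ RHLink K f B u j v

variable {K f}

private lemma rh_notmem_of_good {B : Fin M → Set I} (hB : RHGood K f B) {i : I} {j j' : Fin M}
    (hij : i ∈ B j) (hjj' : j' ≠ j) : i ∉ B j' := fun h =>
  Set.disjoint_left.mp (hB.1 hjj') h hij

/-- The insert step: add an unassigned `x` to part `j` when `f x` is outside its span. -/
private lemma rh_insert_step {B : Fin M → Set I} (hB : RHGood K f B) {x : I}
    (hx : ∀ j, x ∉ B j) {j : Fin M} (hxj : f x ∉ span K (f '' B j)) :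
    ∃ B' : Fin M → Set I, RHGood K f B' ∧ RHw B' = RHw B + 1 := by
  classical
  refine ⟨Function.update B j (insert x (B j)), ⟨?_, ?_⟩, ?_⟩
  · intro a b hab
    simp only [Function.onFun]
    by_cases ha : a = j <;> by_cases hb : b = j
    · exact absurd (ha.trans hb.symm) hab
    · rw [ha, Function.update_self, Function.update_of_ne hb]
      rw [Set.disjoint_left]
      rintro y (rfl | hy)
      · exact hx b
      · exact Set.disjoint_left.mp (hB.1 (ha ▸ hab)) hy
    · rw [hb, Function.update_self, Function.update_of_ne ha]
      rw [Set.disjoint_right]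
      rintro y (rfl | hy)
      · exact hx a
      · exact Set.disjoint_right.mp (hB.1 (hb ▸ hab)) hy
    · rw [Function.update_of_ne ha, Function.update_of_ne hb]
      exact hB.1 hab
  · intro j'
    rcases eq_or_ne j' j with rfl | hj'
    · rw [Function.update_self]
      exact rh_li_insert (hB.2 j') hxj
    · rw [Function.update_of_ne hj']
      exact hB.2 j'
  · unfold RHw
    rw [show (fun j' => ((Function.update B j (insert x (B j)) j')).ncard)
        = Function.update (fun j' => (B j').ncard) j (insert x (B j)).ncard from
      funext fun j' => Function.apply_update (fun _ s => Set.ncard s) B j _ j']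
    rw [Finset.sum_update_of_mem (Finset.mem_univ j),
      Set.ncard_insert_of_notMem (hx j) (B j).toFinite]
    rw [Finset.sum_eq_sum_sdiff_singleton_add (Finset.mem_univ j) (fun j' => (B j').ncard)]
    ring

/-- The exchange step: move `i` from part `jv` into part `js` when `f i` is outside
the span of part `js`. -/
private lemma rh_swap_step {B : Fin M → Set I} (hB : RHGood K f B) {i : I} {jv js : Fin M}
    (hiv : i ∈ B jv) (hins : f i ∉ span K (f '' B js)) :
    ∃ B' : Fin M → Set I, RHGood K f B' ∧ RHw B' = RHw B ∧
      B' js = insert i (B js) ∧ B' jv = B jv \ {i} ∧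
      (∀ k, k ≠ js → k ≠ jv → B' k = B k) := by
  classical
  have hjj : js ≠ jv := by
    rintro rfl
    exact hins (subset_span ⟨i, hiv, rfl⟩)
  have hijs : i ∉ B js := rh_notmem_of_good hB hiv hjj
  set B' : Fin M → Set I :=
    Function.update (Function.update B jv (B jv \ {i})) js (insert i (B js)) with hB'
  have hejs : B' js = insert i (B js) := by
    rw [hB', Function.update_self]
  have hejv : B' jv = B jv \ {i} := by
    rw [hB', Function.update_of_ne (Ne.symm hjj), Function.update_self]
  have hek : ∀ k, k ≠ js → k ≠ jv → B' k = B k := by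
    intro k h1 h2
    rw [hB', Function.update_of_ne h1, Function.update_of_ne h2]
  have hmem : ∀ k y, y ∈ B' k → y = i ∨ y ∈ B k := by
    intro k y hy
    by_cases h1 : k = js
    · subst h1; rw [hejs] at hy
      rcases hy with rfl | hy
      · exact Or.inl rfl
      · exact Or.inr hy
    by_cases h2 : k = jv
    · subst h2; rw [hejv] at hy; exact Or.inr hy.1
    · rw [hek k h1 h2] at hy; exact Or.inr hy
  have hieq : ∀ k, i ∈ B' k → k = js := by
    intro k hk
    by_cases h1 : k = js
    · exact h1
    by_cases h2 : k = jv
    · subst h2; rw [hejv] at hk; exact absurd rfl hk.2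
    · rw [hek k h1 h2] at hk
      exact absurd hk (rh_notmem_of_good hB hiv (by simpa using h2))
  have hsub : ∀ k y, y ∈ B' k → y ≠ i → y ∈ B k := by
    intro k y h1 h2
    rcases hmem k y h1 with rfl | h
    · exact absurd rfl h2
    · exact h
  refine ⟨B', ⟨?_, ?_⟩, ?_, hejs, hejv, hek⟩
  · intro a b hab
    simp only [Function.onFun]
    rw [Set.disjoint_left]
    intro y hya hyb
    by_cases hyi : y = i
    · subst hyi
      exact hab ((hieq a hya).trans (hieq b hyb).symm)
    · exact Set.disjoint_left.mp (hB.1 hab) (hsub a y hya hyi) (hsub b y hyb hyi)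
  · intro k
    by_cases h1 : k = js
    · rw [h1, hejs]
      exact rh_li_insert (hB.2 js) hins
    by_cases h2 : k = jv
    · rw [h2, hejv]
      exact rh_li_mono diff_subset (hB.2 jv)
    · rw [hek k h1 h2]; exact hB.2 k
  · unfold RHw
    have hfun : (fun k => (B' k).ncard)
        = Function.update (Function.update (fun k => (B k).ncard) jv ((B jv \ {i}).ncard))
            js ((insert i (B js)).ncard) := by
      funext k
      by_cases h1 : k = js
      · subst h1; rw [hejs, Function.update_self]
      by_cases h2 : k = jv
      · subst h2
        rw [hejv, Function.update_of_ne (Ne.symm hjj), Function.update_self]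
      · rw [hek k h1 h2, Function.update_of_ne h1, Function.update_of_ne h2]
    rw [hfun]
    rw [Finset.sum_update_of_mem (Finset.mem_univ js)]
    have hjvmem : jv ∈ Finset.univ \ {js} := by
      simp [Ne.symm hjj]
    rw [Finset.sum_update_of_mem hjvmem]
    have h3 : ∑ k ∈ Finset.univ, (B k).ncard
        = (B js).ncard + ((B jv).ncard + ∑ k ∈ (Finset.univ \ {js}) \ {jv}, (B k).ncard) := by
      rw [← Finset.sum_eq_add_sum_sdiff_singleton_of_mem hjvmem (fun k => (B k).ncard),
        ← Finset.sum_eq_add_sum_sdiff_singleton_of_mem (Finset.mem_univ js) (fun k => (B k).ncard)]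
    rw [h3, Set.ncard_insert_of_notMem hijs (B js).toFinite,
      Set.ncard_diff_singleton_of_mem hiv]
    have : 0 < (B jv).ncard := (Set.ncard_pos (B jv).toFinite).mpr ⟨i, hiv⟩
    omega

private lemma RHReach_zero {B : Fin M → Set I} {x v : I} :
    RHReach K f B x 0 v ↔ v = x := Iff.rfl

private lemma RHReach_succ {B : Fin M → Set I} {x v : I} {n : ℕ} :
    RHReach K f B x (n + 1) v ↔ ∃ u j, RHReach K f B x n u ∧ RHLink K f B u j v := Iff.rfl

/-- The augmentation lemma: if from an unassigned `x` some index `i` with `f i` outside the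
span of some part is reachable in the exchange graph, then the total size can be increased. -/
private lemma rh_aug (n : ℕ) : ∀ B : Fin M → Set I, RHGood K f B → ∀ x : I, (∀ k, x ∉ B k) →
    ∀ m, m ≤ n → ∀ i (j : Fin M), RHReach K f B x m i → f i ∉ span K (f '' B j) →
    ∃ B' : Fin M → Set I, RHGood K f B' ∧ RHw B' = RHw B + 1 := by
  induction n with
  | zero =>
    intro B hB x hx m hm i j hr hins
    interval_cases m
    rw [RHReach_zero] at hr
    subst hr
    exact rh_insert_step hB hx hins
  | succ n ih =>
    intro B hB x hx m hm i j hr hins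
    classical
    set P : ℕ → Prop := fun m' => ∃ i' j', RHReach K f B x m' i' ∧ f i' ∉ span K (f '' B j')
      with hPdef
    haveI : DecidablePred P := Classical.decPred P
    have hP : ∃ m', P m' := ⟨m, i, j, hr, hins⟩
    have hm₀ : P (Nat.find hP) := Nat.find_spec hP
    have hm₀le : Nat.find hP ≤ m := Nat.find_le ⟨i, j, hr, hins⟩
    have hmin : ∀ s, s < Nat.find hP → ¬ P s := fun s hs => Nat.find_min hP hs
    have hblocked : ∀ s, s < Nat.find hP → ∀ v, RHReach K f B x s v →
        ∀ k, f v ∈ span K (f '' B k) := by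
      intro s hs v hv k
      by_contra hcon
      exact hmin s hs ⟨v, k, hv, hcon⟩
    by_cases h0 : Nat.find hP = 0
    · rw [h0] at hm₀
      obtain ⟨i0, j0, hr0, hins0⟩ := hm₀
      rw [RHReach_zero] at hr0
      subst hr0
      exact rh_insert_step hB hx hins0
    · obtain ⟨k, hk⟩ := Nat.exists_eq_succ_of_ne_zero h0
      rw [hk] at hm₀ hm₀le
      have hminK : ∀ s, s ≤ k → ¬ P s := fun s hs => hmin s (by omega)
      have hblockedK : ∀ s, s ≤ k → ∀ v, RHReach K f B x s v →
          ∀ k', f v ∈ span K (f '' B k') := fun s hs => hblocked s (by omega)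
      obtain ⟨istar, jstar, hrstar, hinsstar⟩ := hm₀
      rw [RHReach_succ] at hrstar
      obtain ⟨u, jv, hru, hlink⟩ := hrstar
      obtain ⟨histar, huspan, hunot⟩ := hlink
      -- istar ∈ B jv, f u ∈ span (f '' B jv), f u ∉ span (f '' (B jv \ {istar}))
      obtain ⟨B', hB'good, hB'w, hejs, hejv, hek⟩ := rh_swap_step hB histar hinsstar
      have hjj : jstar ≠ jv := by
        rintro rfl
        exact hinsstar (subset_span ⟨istar, histar, rfl⟩)
      have hxistar : x ≠ istar := by
        intro hxi
        exact hinsstar (hxi ▸ hblockedK 0 (Nat.zero_le k) x rfl jstar)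
      -- membership description of B'
      have hmem' : ∀ k' y, y ∈ B k' → y ≠ istar → y ∈ B' k' := by
        intro k' y hy hyne
        by_cases h1 : k' = jstar
        · rw [h1, hejs]; exact Set.mem_insert_of_mem _ (h1 ▸ hy)
        by_cases h2 : k' = jv
        · rw [h2, hejv]; exact ⟨h2 ▸ hy, by simpa using hyne⟩
        · rw [hek k' h1 h2]; exact hy
      -- reachable vertices are ≠ istar
      have hne_istar : ∀ s, s ≤ k → ∀ v, RHReach K f B x s v → v ≠ istar := by
        intro s hs v hv hvi
        exact hinsstar (hvi ▸ hblockedK s hs v hv jstar)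
      -- transfer of reachability to B'
      have htrans : ∀ s, s ≤ k → ∀ v, RHReach K f B x s v → RHReach K f B' x s v := by
        intro s
        induction s with
        | zero => intro _ v hv; exact hv
        | succ s ihs =>
          intro hsk v hv
          rw [RHReach_succ] at hv ⊢
          obtain ⟨u', j', hru', hlk⟩ := hv
          obtain ⟨hvmem, huspan', hunot'⟩ := hlk
          have hsk' : s ≤ k := by omega
          have hu'bl : ∀ k', f u' ∈ span K (f '' B k') := hblockedK s hsk' u' hru'
          refine ⟨u', j', ihs hsk' u' hru', ?_, ?_, ?_⟩
          · -- v ∈ B' j'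
            exact hmem' j' v hvmem (hne_istar (s+1) hsk v (by
              rw [RHReach_succ]; exact ⟨u', j', hru', hvmem, huspan', hunot'⟩))
          · -- f u' ∈ span (f '' B' j')
            by_cases h1 : j' = jstar
            · rw [h1, hejs]
              exact span_mono (Set.image_mono (f := f) (Set.subset_insert _ _)) (hu'bl jstar)
            by_cases h2 : j' = jv
            · rw [h2, hejv]
              by_contra hcon
              apply hminK (s+1) hsk
              refine ⟨istar, jstar, ?_, hinsstar⟩
              rw [RHReach_succ]
              exact ⟨u', jv, hru', histar, h2 ▸ hu'bl jv, h2 ▸ hcon⟩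
            · rw [hek j' h1 h2]; exact hu'bl j'
          · -- f u' ∉ span (f '' (B' j' \ {v}))
            by_cases h1 : j' = jstar
            · subst h1
              rw [hejs]
              intro hcon
              apply hunot'
              have hvistar : istar ≠ v :=
                Ne.symm (hne_istar (s+1) hsk v (by
                  rw [RHReach_succ]; exact ⟨u', j', hru', hvmem, huspan', hunot'⟩))
              have heq : insert istar (B j') \ {v} = insert istar (B j' \ {v}) := by
                rw [Set.insert_diff_of_notMem]
                simpa using hvistar
              rw [heq, Set.image_insert_eq] at hcon
              exact rh_mem_span_of_insert hcon (hu'bl j')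
                (span_mono (Set.image_mono (f := f) diff_subset)) hinsstar
            by_cases h2 : j' = jv
            · subst h2
              rw [hejv]
              intro hcon
              apply hunot'
              refine span_mono (Set.image_mono (f := f) ?_) hcon
              intro y hy
              exact ⟨hy.1.1, hy.2⟩
            · rw [hek j' h1 h2]; exact hunot'
      -- now apply the induction hypothesis to B'
      have hx' : ∀ k', x ∉ B' k' := by
        intro k'
        by_cases h1 : k' = jstar
        · rw [h1, hejs]
          rintro (rfl | hmem2)
          · exact hxistar rfl
          · exact hx jstar hmem2
        by_cases h2 : k' = jv
        · rw [h2, hejv]; exact fun h => hx jv h.1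
        · rw [hek k' h1 h2]; exact hx k'
      have hku : RHReach K f B' x k u := htrans k le_rfl u hru
      have hend : f u ∉ span K (f '' B' jv) := by
        rw [hejv]; exact hunot
      obtain ⟨B'', hB''good, hB''w⟩ := ih B' hB'good x hx' k (by omega) u jv hku hend
      exact ⟨B'', hB''good, by omega⟩

private lemma rh_ncard_biUnion {β : Type*} [DecidableEq β] (F : Finset β) (S : β → Set I)
    (hdis : ∀ a ∈ F, ∀ b ∈ F, a ≠ b → Disjoint (S a) (S b)) :
    (⋃ b ∈ F, S b).ncard = ∑ b ∈ F, (S b).ncard := by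
  classical
  induction F using Finset.induction_on with
  | empty => simp
  | @insert a F ha ihF =>
    rw [Finset.set_biUnion_insert, Finset.sum_insert ha,
      Set.ncard_union_eq ?_ (S a).toFinite (Set.toFinite _),
      ihF (fun a' ha' b hb hab =>
        hdis a' (Finset.mem_insert_of_mem ha') b (Finset.mem_insert_of_mem hb) hab)]
    rw [Set.disjoint_left]
    intro y hy hy2
    simp only [Set.mem_iUnion] at hy2
    obtain ⟨b, hb, hyb⟩ := hy2
    exact Set.disjoint_left.mp
      (hdis a (Finset.mem_insert_self a F) b (Finset.mem_insert_of_mem hb)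
        (fun h => ha (h ▸ hb))) hy hyb

end RadoHornAux

/-- Rado–Horn, linear algebra version: A finite family `{f i}_{i ∈ I}`
of vectors can be partitioned into `M` linearly independent sets iff for every
nonempty `J ⊆ I`, `|J| ≤ M · dim span{f i}_{i ∈ J}`. -/
theorem radoHorn_linear {K X : Type*} [Field K] [AddCommGroup X] [Module K X]
    {I : Type*} [Fintype I] (f : I → X) (M : ℕ) (hM : 0 < M) :
    (∃ A : Fin M → Set I,
        (⋃ j, A j) = Set.univ ∧ Pairwise (Function.onFun Disjoint A) ∧
        ∀ j, LinearIndependent K ((A j).restrict f)) ↔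
      ∀ Js : Set I, Js.Nonempty →
        Js.ncard ≤ M * Module.finrank K (Submodule.span K (f '' Js)) := by
  classical
  constructor
  · rintro ⟨A, hcover, hdis, hind⟩ Js _
    haveI : FiniteDimensional K (Submodule.span K (f '' Js)) :=
      FiniteDimensional.span_of_finite K (Js.toFinite.image f)
    have hJeq : Js = ⋃ j ∈ (Finset.univ : Finset (Fin M)), (A j ∩ Js) := by
      ext y
      simp only [Set.mem_iUnion, Set.mem_inter_iff, Finset.mem_univ, exists_true_left,
        exists_prop, true_and]
      constructor
      · intro hy
        have : y ∈ ⋃ j, A j := hcover ▸ Set.mem_univ y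
        obtain ⟨j, hj⟩ := Set.mem_iUnion.mp this
        exact ⟨j, hj, hy⟩
      · rintro ⟨j, _, hy⟩; exact hy
    have hsum : Js.ncard = ∑ j : Fin M, (A j ∩ Js).ncard := by
      have h := rh_ncard_biUnion Finset.univ (fun j => A j ∩ Js)
        (fun a _ b _ hab => ((hdis hab).mono Set.inter_subset_left Set.inter_subset_left))
      rw [← hJeq] at h
      exact h
    rw [hsum]
    have hle : ∀ j : Fin M, (A j ∩ Js).ncard
        ≤ Module.finrank K (Submodule.span K (f '' Js)) := by
      intro j
      rw [rh_ncard_eq_finrank (rh_li_mono Set.inter_subset_left (hind j))]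
      exact Submodule.finrank_mono
        (Submodule.span_mono (Set.image_mono (f := f) Set.inter_subset_right))
    calc ∑ j : Fin M, (A j ∩ Js).ncard
        ≤ ∑ _j : Fin M, Module.finrank K (Submodule.span K (f '' Js)) :=
          Finset.sum_le_sum fun j _ => hle j
      _ = M * Module.finrank K (Submodule.span K (f '' Js)) := by
          rw [Finset.sum_const, Finset.card_univ, Fintype.card_fin, smul_eq_mul]
  · intro hcond
    set T : Set ℕ := {n | ∃ B : Fin M → Set I, RHGood K f B ∧ RHw B = n} with hT
    have hTne : T.Nonempty := by
      refine ⟨0, fun _ => (∅ : Set I), ⟨fun a b hab => ?_, fun j => ?_⟩, by simp [RHw]⟩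
      · simp [Function.onFun]
      · exact linearIndependent_empty_type
    have hTbdd : BddAbove T := by
      refine ⟨M * Fintype.card I, ?_⟩
      rintro n ⟨B, _, rfl⟩
      unfold RHw
      calc ∑ j, (B j).ncard ≤ ∑ _j : Fin M, Fintype.card I :=
            Finset.sum_le_sum fun j _ =>
              calc (B j).ncard ≤ (Set.univ : Set I).ncard :=
                    Set.ncard_le_ncard (Set.subset_univ _) Set.finite_univ
                _ = Fintype.card I := by rw [Set.ncard_univ, Nat.card_eq_fintype_card]
        _ = M * Fintype.card I := by
            rw [Finset.sum_const, Finset.card_univ, Fintype.card_fin, smul_eq_mul]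
    obtain ⟨B, hBgood, hBw⟩ := Nat.sSup_mem hTne hTbdd
    have hmax : ∀ B' : Fin M → Set I, RHGood K f B' → RHw B' ≤ RHw B := by
      intro B' h
      rw [hBw]
      exact le_csSup hTbdd ⟨B', h, rfl⟩
    have hcov : (⋃ j, B j) = Set.univ := by
      by_contra hcov
      obtain ⟨x, hx⟩ := (Set.ne_univ_iff_exists_notMem _).mp hcov
      have hx' : ∀ k, x ∉ B k := by
        intro k hk
        exact hx (Set.mem_iUnion.mpr ⟨k, hk⟩)
      have hbl : ∀ (nr : ℕ) (i : I), RHReach K f B x nr i →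
          ∀ j, f i ∈ Submodule.span K (f '' B j) := by
        intro nr i hr j
        by_contra hcon
        obtain ⟨B', hB'good, hB'w⟩ := rh_aug nr B hBgood x hx' nr le_rfl i j hr hcon
        have := hmax B' hB'good
        omega
      set R : Set I := {i | ∃ nr, RHReach K f B x nr i} with hR
      have hxR : x ∈ R := ⟨0, rfl⟩
      have hspan : ∀ j, f '' R ⊆ Submodule.span K (f '' (B j ∩ R)) := by
        rintro j _ ⟨i, ⟨nr, hr⟩, rfl⟩
        have hfi : f i ∈ Submodule.span K (f '' B j) := hbl nr i hr j
        obtain ⟨C, hCs, hCspan, hCmin⟩ := rh_circuit (hBgood.2 j) hfi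
        have hCR : C ⊆ B j ∩ R := by
          intro i' hi'
          refine ⟨hCs hi', nr + 1, ?_⟩
          rw [RHReach_succ]
          exact ⟨i, j, hr, hCs hi', hfi, hCmin i' hi'⟩
        exact Submodule.span_mono (Set.image_mono (f := f) hCR) hCspan
      have hspaneq : ∀ j, Submodule.span K (f '' (B j ∩ R)) = Submodule.span K (f '' R) :=
        fun j => le_antisymm
          (Submodule.span_mono (Set.image_mono (f := f) Set.inter_subset_right))
          (Submodule.span_le.mpr (hspan j))
      have hcard : ∀ j, (B j ∩ R).ncard
          = Module.finrank K (Submodule.span K (f '' R)) := by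
        intro j
        rw [rh_ncard_eq_finrank (rh_li_mono Set.inter_subset_left (hBgood.2 j)), hspaneq j]
      have hsubR : insert x (⋃ j ∈ (Finset.univ : Finset (Fin M)), (B j ∩ R)) ⊆ R := by
        intro y hy
        rcases hy with rfl | hy
        · exact hxR
        · simp only [Set.mem_iUnion] at hy
          obtain ⟨j, _, hj⟩ := hy
          exact hj.2
      have hUcard : (⋃ j ∈ (Finset.univ : Finset (Fin M)), (B j ∩ R)).ncard
          = M * Module.finrank K (Submodule.span K (f '' R)) := by
        rw [rh_ncard_biUnion Finset.univ (fun j => B j ∩ R)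
          (fun a _ b _ hab => ((hBgood.1 hab).mono Set.inter_subset_left Set.inter_subset_left))]
        rw [Finset.sum_congr rfl (fun j _ => hcard j), Finset.sum_const, Finset.card_univ,
          Fintype.card_fin, smul_eq_mul]
      have hxU : x ∉ (⋃ j ∈ (Finset.univ : Finset (Fin M)), (B j ∩ R)) := by
        intro hxu
        simp only [Set.mem_iUnion] at hxu
        obtain ⟨j, _, hj⟩ := hxu
        exact hx' j hj.1
      have hlow : M * Module.finrank K (Submodule.span K (f '' R)) + 1 ≤ R.ncard := by
        have h1 : (insert x (⋃ j ∈ (Finset.univ : Finset (Fin M)), (B j ∩ R))).ncard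
            = M * Module.finrank K (Submodule.span K (f '' R)) + 1 := by
          rw [Set.ncard_insert_of_notMem hxU (Set.toFinite _), hUcard]
        rw [← h1]
        exact Set.ncard_le_ncard hsubR (Set.toFinite _)
      have hup := hcond R ⟨x, hxR⟩
      omega
    exact ⟨B, hcov, hBgood.1, hBgood.2⟩
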